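/- Let E = (C, V) be an election with |C| ≥ 2, and let G be the simple graph on vertex set C in which two candidates are joined by an edge exactly when they are connected in E. Then E is linked if and only if there exist two candidates a, b ∈ C that are connected in E such that, for every set S ⊆ C with {a, b} ⊆ S and S ≠ C, there exists a candidate c ∈ C \ S that is connected in E to at least two candidates in S. -/

import Mathlib

/-- Two candidates `a, b` are connected in the election with vote multiset `votes`
(each vote a linear order over the candidates, modeled as a ranking list) if some
vote ranks `a` first and `b` second and some vote ranks `b` first and `a` second. -/
def ElecConnected {C : Type*} (votes : Multiset (List C)) (a b : C) : Prop :=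
  (∃ v ∈ votes, ∃ rest, v = a :: b :: rest) ∧
  (∃ v ∈ votes, ∃ rest, v = b :: a :: rest)

/-- The election is linked: there is an enumeration `(c₁, …, c_m)` of all candidates
such that `c₁` and `c₂` are connected, and every `c_i` with `i ≥ 3` is connected to at
least two candidates in `{c₁, …, c_{i-1}}`. -/
def IsLinkedElection {C : Type*} [Fintype C] (votes : Multiset (List C)) : Prop :=
  ∃ l : List C, (∀ c : C, c ∈ l) ∧ l.Nodup ∧
    (∀ a b rest, l = a :: b :: rest → ElecConnected votes a b) ∧
    (∀ pre c suf, l = pre ++ c :: suf → 2 ≤ pre.length →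
      ∃ x ∈ pre, ∃ y ∈ pre, x ≠ y ∧
        ElecConnected votes c x ∧ ElecConnected votes c y)

/-- Auxiliary: a partial enumeration satisfying the linkedness conditions. -/
def GoodList {C : Type*} (votes : Multiset (List C)) (l : List C) : Prop :=
  l.Nodup ∧
  (∀ a b rest, l = a :: b :: rest → ElecConnected votes a b) ∧
  (∀ pre c suf, l = pre ++ c :: suf → 2 ≤ pre.length →
    ∃ x ∈ pre, ∃ y ∈ pre, x ≠ y ∧
      ElecConnected votes c x ∧ ElecConnected votes c y)

lemma exists_first_split {α : Type*} (p : α → Prop) [DecidablePred p] :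
    ∀ l : List α, (∃ x ∈ l, p x) →
      ∃ pre c suf, l = pre ++ c :: suf ∧ p c ∧ ∀ x ∈ pre, ¬ p x := by
  intro l
  induction l with
  | nil => simp
  | cons h t ih =>
    intro hx
    by_cases hp : p h
    · exact ⟨[], h, t, rfl, hp, by simp⟩
    · obtain ⟨x, hxt, hpx⟩ := hx
      rcases List.mem_cons.mp hxt with rfl | hxt
      · exact absurd hpx hp
      · obtain ⟨pre, c, suf, heq, hpc, hpre⟩ := ih ⟨x, hxt, hpx⟩
        refine ⟨h :: pre, c, suf, by rw [heq]; rfl, hpc, ?_⟩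
        intro y hy
        rcases List.mem_cons.mp hy with rfl | hy
        · exact hp
        · exact hpre y hy

lemma goodlist_concat {C : Type*} (votes : Multiset (List C)) (l : List C) (c : C)
    (hg : GoodList votes l) (hc : c ∉ l) (hl2 : 2 ≤ l.length)
    (x y : C) (hx : x ∈ l) (hy : y ∈ l) (hxy : x ≠ y)
    (hcx : ElecConnected votes c x) (hcy : ElecConnected votes c y) :
    GoodList votes (l ++ [c]) := by
  obtain ⟨hnd, hhead, hrest⟩ := hg
  refine ⟨?_, ?_, ?_⟩
  · simp [List.nodup_append, hnd, hc]
    exact fun a ha h => hc (h ▸ ha)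
  · intro a b rest h
    rcases l with _ | ⟨a', l'⟩
    · simp at hl2
    rcases l' with _ | ⟨b', t⟩
    · simp at hl2
    simp only [List.cons_append, List.cons.injEq] at h
    obtain ⟨rfl, rfl, -⟩ := h
    exact hhead _ _ t rfl
  · intro pre d suf h h2
    rcases suf.eq_nil_or_concat with rfl | ⟨s, z, rfl⟩
    · obtain ⟨rfl, hcd⟩ := List.append_inj' h (by simp)
      simp only [List.cons.injEq] at hcd
      obtain ⟨rfl, -⟩ := hcd
      exact ⟨x, hx, y, hy, hxy, hcx, hcy⟩
    · rw [List.concat_eq_append,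
        show pre ++ d :: (s ++ [z]) = (pre ++ d :: s) ++ [z] by simp] at h
      obtain ⟨hl, hcz⟩ := List.append_inj' h (by simp)
      exact hrest pre d s hl h2

theorem linked_election_iff {C : Type*} [Fintype C] [DecidableEq C]
    (votes : Multiset (List C))
    (hvotes : ∀ v ∈ votes, v.Nodup ∧ ∀ c : C, c ∈ v)
    (hC : 2 ≤ Fintype.card C)
    (G : SimpleGraph C) (hG : ∀ x y : C, G.Adj x y ↔ ElecConnected votes x y) :
    IsLinkedElection votes ↔
      ∃ a b : C, ElecConnected votes a b ∧
        ∀ S : Finset C, a ∈ S → b ∈ S → S ≠ Finset.univ →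
          ∃ c ∉ S, ∃ x ∈ S, ∃ y ∈ S, x ≠ y ∧
            ElecConnected votes c x ∧ ElecConnected votes c y := by
  constructor
  · rintro ⟨l, hall, hnd, hhead, hrest⟩
    rcases l with _ | ⟨a, l'⟩
    · obtain ⟨z, -⟩ := Fintype.exists_pair_of_one_lt_card (α := C) (by omega)
      exact absurd (hall z) (by simp)
    rcases l' with _ | ⟨b, t⟩
    · obtain ⟨z, w, hzw⟩ := Fintype.exists_pair_of_one_lt_card (α := C) (by omega)
      have hz := hall z; have hw := hall w
      simp only [List.mem_singleton] at hz hw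
      exact absurd (hz.trans hw.symm) hzw
    refine ⟨a, b, hhead a b t rfl, ?_⟩
    intro S haS hbS hSne
    have : ∃ z, z ∉ S := by
      by_contra hcon
      push_neg at hcon
      exact hSne (Finset.eq_univ_iff_forall.mpr hcon)
    obtain ⟨z, hz⟩ := this
    obtain ⟨pre, c, suf, heq, hpc, hpre⟩ :=
      exists_first_split (fun x => x ∉ S) (a :: b :: t) ⟨z, hall z, hz⟩
    have hpreS : ∀ x ∈ pre, x ∈ S := fun x hx => not_not.mp (hpre x hx)
    have h2 : 2 ≤ pre.length := by
      rcases pre with _ | ⟨p1, _ | ⟨p2, pr⟩⟩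
      · simp only [List.nil_append, List.cons.injEq] at heq
        exact absurd (heq.1 ▸ haS) hpc
      · simp only [List.cons_append, List.nil_append, List.cons.injEq] at heq
        exact absurd (heq.2.1 ▸ hbS) hpc
      · simp
    obtain ⟨x, hx, y, hy, hxy, hcx, hcy⟩ := hrest pre c suf heq h2
    exact ⟨c, hpc, x, hpreS x hx, y, hpreS y hy, hxy, hcx, hcy⟩
  · rintro ⟨a, b, hab, hS⟩
    have hne : a ≠ b := by
      obtain ⟨⟨v, hv, rest, rfl⟩, -⟩ := hab
      intro h
      subst h
      have := (hvotes _ hv).1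
      simp at this
    have key : ∀ n (l : List C), GoodList votes l → 2 ≤ l.length →
        a ∈ l → b ∈ l →
        (Finset.univ \ l.toFinset).card ≤ n →
        ∃ l', (∀ c : C, c ∈ l') ∧ GoodList votes l' := by
      intro n
      induction n with
      | zero =>
        intro l hg hl2 _ _ hcard
        refine ⟨l, fun c => ?_, hg⟩
        have h0 : Finset.univ \ l.toFinset = ∅ := Finset.card_eq_zero.mp (Nat.le_zero.mp hcard)
        have h1 := Finset.sdiff_eq_empty_iff_subset.mp h0
        exact List.mem_toFinset.mp (h1 (Finset.mem_univ c))
      | succ n ih =>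
        intro l hg hl2 hal hbl hcard
        by_cases huniv : l.toFinset = Finset.univ
        · refine ⟨l, fun c => ?_, hg⟩
          exact List.mem_toFinset.mp (huniv ▸ Finset.mem_univ c : c ∈ l.toFinset)
        · obtain ⟨c, hc, x, hx, y, hy, hxy, hcx, hcy⟩ :=
            hS l.toFinset (List.mem_toFinset.mpr hal) (List.mem_toFinset.mpr hbl) huniv
          have hcl : c ∉ l := fun h => hc (List.mem_toFinset.mpr h)
          have hg' := goodlist_concat votes l c hg hcl hl2 x y
            (List.mem_toFinset.mp hx) (List.mem_toFinset.mp hy) hxy hcx hcy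
          apply ih (l ++ [c]) hg' (by simp; omega) (by simp [hal]) (by simp [hbl])
          have hsub : Finset.univ \ (l ++ [c]).toFinset ⊆
              (Finset.univ \ l.toFinset).erase c := by
            intro z hz
            simp only [List.toFinset_append, List.toFinset_cons, List.toFinset_nil,
              Finset.mem_sdiff, Finset.mem_union, Finset.mem_erase] at hz ⊢
            simp only [Finset.mem_insert, Finset.notMem_empty] at hz
            push_neg at hz
            exact ⟨hz.2.2.1, Finset.mem_univ z, hz.2.1⟩
          calc (Finset.univ \ (l ++ [c]).toFinset).card
              ≤ ((Finset.univ \ l.toFinset).erase c).card := Finset.card_le_card hsub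
            _ = (Finset.univ \ l.toFinset).card - 1 :=
                Finset.card_erase_of_mem (Finset.mem_sdiff.mpr ⟨Finset.mem_univ c, hc⟩)
            _ ≤ n := by omega
    have hg0 : GoodList votes [a, b] := by
      refine ⟨by simp [hne], ?_, ?_⟩
      · intro a' b' rest h
        simp only [List.cons.injEq] at h
        obtain ⟨rfl, rfl, -⟩ := h
        exact hab
      · intro pre d suf h h2
        have := congrArg List.length h
        simp at this
        omega
    obtain ⟨l', hall', hg'⟩ := key (Fintype.card C) [a, b] hg0 (by simp)
      (by simp) (by simp) (by
        calc (Finset.univ \ ([a,b] : List C).toFinset).card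
            ≤ Finset.univ.card := Finset.card_le_card (Finset.sdiff_subset)
          _ = Fintype.card C := Finset.card_univ)
    exact ⟨l', hall', hg'.1, hg'.2.1, hg'.2.2⟩
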